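/- Suppose there exists a (v,5,k,λ)-SEDF with k > 1, and let χ be a nontrivial character with X := χ(𝒟) ≠ 0, writing χ(D_j) = α_j X with α_j nonzero reals. Then, up to relabeling, exactly two of the α_j equal 2 and the other three equal −1, and 2|X|² = λ. -/

import Mathlib

/-- A `(v,m,k,λ)`-strong external difference family in a finite abelian group `G`:
`m` pairwise disjoint `k`-subsets `D j` of `G`, `|G| = v`, such that for each `j`,
every non-identity `g ∈ G` has exactly `λ` representations `g = x * y⁻¹` with
`x ∈ D j`, `y ∈ D ℓ`, `ℓ ≠ j`, and the identity has no such representations. -/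
def IsSEDF (G : Type) [CommGroup G] [Fintype G] [DecidableEq G]
    (v m k lam : ℕ) (D : Fin m → Finset G) : Prop :=
  Fintype.card G = v ∧
  (∀ j, (D j).card = k) ∧
  (∀ i j : Fin m, i ≠ j → Disjoint (D i) (D j)) ∧
  ∀ (j : Fin m) (g : G),
    (Finset.univ.filter (fun p : Fin m × G × G =>
      p.1 ≠ j ∧ p.2.1 ∈ D j ∧ p.2.2 ∈ D p.1 ∧ p.2.1 * p.2.2⁻¹ = g)).card
      = if g = 1 then 0 else lam

lemma aux_sum_zero {G : Type} [CommGroup G] [Fintype G] (χ : G →* ℂ) (hχ : χ ≠ 1) :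
    ∑ g : G, χ g = 0 := by
  obtain ⟨g₀, hg₀⟩ : ∃ g₀, χ g₀ ≠ 1 := by
    by_contra hc
    push_neg at hc
    exact hχ (MonoidHom.ext fun g => by simp [hc g])
  have key : χ g₀ * ∑ g : G, χ g = ∑ g : G, χ g := by
    rw [Finset.mul_sum]
    exact Fintype.sum_equiv (Equiv.mulLeft g₀) _ _ (fun g => by simp [← map_mul])
  have h0 : (χ g₀ - 1) * ∑ g : G, χ g = 0 := by linear_combination key
  rcases mul_eq_zero.mp h0 with h1 | h2
  · exact absurd (by linear_combination h1) hg₀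
  · exact h2

lemma aux_conj {G : Type} [CommGroup G] [Fintype G] (χ : G →* ℂ) (g : G) :
    (starRingEnd ℂ) (χ g) = χ g⁻¹ := by
  have hmul : χ g * χ g⁻¹ = 1 := by rw [← map_mul]; simp
  have hne : χ g ≠ 0 := left_ne_zero_of_mul_eq_one hmul
  have hpow : (χ g) ^ Fintype.card G = 1 := by
    rw [← map_pow, pow_card_eq_one, map_one]
  have hnorm : ‖χ g‖ = 1 := by
    have h1 : ‖χ g‖ ^ Fintype.card G = 1 := by
      rw [← norm_pow, hpow, norm_one]
    have hn0 : Fintype.card G ≠ 0 := Fintype.card_ne_zero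
    rcases lt_trichotomy ‖χ g‖ 1 with hl | hl | hl
    · nlinarith [pow_lt_one₀ (norm_nonneg (χ g)) hl hn0]
    · exact hl
    · nlinarith [one_lt_pow₀ hl hn0]
  have hconj : χ g * (starRingEnd ℂ) (χ g) = 1 := by
    rw [Complex.mul_conj]
    norm_cast
    rw [Complex.normSq_eq_norm_sq, hnorm]; norm_num
  exact mul_left_cancel₀ hne (hconj.trans hmul.symm)

theorem stmt_14 (G : Type) [CommGroup G] [Fintype G] [DecidableEq G]
    (v k lam : ℕ) (hk : 1 < k) (D : Fin 5 → Finset G)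
    (h : IsSEDF G v 5 k lam D) (χ : G →* ℂ) (hχ : χ ≠ 1)
    (X : ℂ) (hXdef : X = ∑ g ∈ Finset.univ.biUnion D, χ g) (hX : X ≠ 0)
    (α : Fin 5 → ℝ) (hα : ∀ j, α j ≠ 0)
    (hαdef : ∀ j, ∑ g ∈ D j, χ g = (α j : ℂ) * X) :
    (Finset.univ.filter (fun j => α j = 2)).card = 2 ∧
    (Finset.univ.filter (fun j => α j = -1)).card = 3 ∧
    2 * ‖X‖ ^ 2 = (lam : ℝ) := by
  obtain ⟨hv, hcard, hdisj, hcount⟩ := h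
  -- λ > 0
  have hlam : 0 < lam := by
    obtain ⟨x, hx⟩ := Finset.card_pos.mp (by rw [hcard 0]; omega : 0 < (D 0).card)
    obtain ⟨y, hy⟩ := Finset.card_pos.mp (by rw [hcard 1]; omega : 0 < (D 1).card)
    have hxy : x * y⁻¹ ≠ 1 := by
      intro hc
      have hxy' : x = y := by
        have := mul_inv_eq_one.mp hc
        exact this
      exact (Finset.disjoint_left.mp (hdisj 0 1 (by decide)) hx) (hxy' ▸ hy)
    have hmem : ((1 : Fin 5), x, y) ∈ Finset.univ.filter (fun p : Fin 5 × G × G =>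
        p.1 ≠ (0 : Fin 5) ∧ p.2.1 ∈ D 0 ∧ p.2.2 ∈ D p.1 ∧ p.2.1 * p.2.2⁻¹ = x * y⁻¹) := by
      simp [hx, hy]
    have := hcount 0 (x * y⁻¹)
    rw [if_neg hxy] at this
    have := Finset.card_pos.mpr ⟨_, hmem⟩
    omega
  -- sum of α equals 1
  have hsumα : ∑ j, α j = 1 := by
    have hXs : (∑ j, (α j : ℂ)) * X = X := by
      rw [Finset.sum_mul]
      conv_rhs => rw [hXdef]
      rw [Finset.sum_biUnion (fun i _ j _ hij => hdisj i j hij)]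
      exact Finset.sum_congr rfl fun j _ => (hαdef j).symm
    have h1 : (∑ j, (α j : ℂ)) * X = 1 * X := by rw [hXs, one_mul]
    have h2 := mul_right_cancel₀ hX h1
    exact_mod_cast h2
  -- key complex identity for each j
  have hkey : ∀ j : Fin 5, (α j : ℝ) * (1 - α j) * ‖X‖ ^ 2 = -(lam : ℝ) := by
    intro j
    have step1 : (∑ p ∈ Finset.univ.filter (fun p : Fin 5 × G × G =>
          p.1 ≠ j ∧ p.2.1 ∈ D j ∧ p.2.2 ∈ D p.1), χ (p.2.1 * p.2.2⁻¹))
        = ∑ ℓ ∈ Finset.univ.filter (· ≠ j), ∑ x ∈ D j, ∑ y ∈ D ℓ, χ (x * y⁻¹) := by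
      rw [Finset.sum_filter, Fintype.sum_prod_type]
      simp only [Fintype.sum_prod_type]
      rw [Finset.sum_filter]
      refine Finset.sum_congr rfl fun ℓ _ => ?_
      by_cases hℓ : ℓ = j
      · simp [hℓ]
      · simp only [hℓ, if_true, ne_eq, not_false_iff, true_and, ite_and,
          Finset.sum_ite_irrel, Finset.sum_const_zero, Finset.sum_ite_mem, Finset.univ_inter]
    -- fiberwise count: sum equals -lam
    have step2 : (∑ p ∈ Finset.univ.filter (fun p : Fin 5 × G × G =>
          p.1 ≠ j ∧ p.2.1 ∈ D j ∧ p.2.2 ∈ D p.1), χ (p.2.1 * p.2.2⁻¹)) = -(lam : ℂ) := by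
      rw [← Finset.sum_fiberwise' _ (fun p : Fin 5 × G × G => p.2.1 * p.2.2⁻¹) (fun g => χ g)]
      have hfib : ∀ g : G, ((Finset.univ.filter (fun p : Fin 5 × G × G =>
            p.1 ≠ j ∧ p.2.1 ∈ D j ∧ p.2.2 ∈ D p.1)).filter
            (fun p => p.2.1 * p.2.2⁻¹ = g)).card = if g = 1 then 0 else lam := by
        intro g
        rw [Finset.filter_filter, ← hcount j g]
        congr 1
        apply Finset.filter_congr
        intro p _
        constructor <;> intro hp <;> tauto
      calc (∑ g : G, ∑ p ∈ (Finset.univ.filter (fun p : Fin 5 × G × G =>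
            p.1 ≠ j ∧ p.2.1 ∈ D j ∧ p.2.2 ∈ D p.1)).filter
            (fun p => p.2.1 * p.2.2⁻¹ = g), χ g)
          = ∑ g : G, ((lam:ℂ) * χ g - if g = 1 then (lam:ℂ) * χ g else 0) := by
            refine Finset.sum_congr rfl fun g _ => ?_
            rw [Finset.sum_const, hfib g]
            split_ifs with hg <;> simp [hg]
        _ = (lam:ℂ) * ∑ g : G, χ g - (lam:ℂ) * χ 1 := by
            rw [Finset.sum_sub_distrib, ← Finset.mul_sum, Finset.sum_ite_eq' Finset.univ 1]
            simp
        _ = -(lam : ℂ) := by rw [aux_sum_zero χ hχ]; simp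
    -- evaluate via characters
    have step3 : (∑ ℓ ∈ Finset.univ.filter (· ≠ j), ∑ x ∈ D j, ∑ y ∈ D ℓ, χ (x * y⁻¹))
        = (α j : ℂ) * (1 - α j) * (X * (starRingEnd ℂ) X) := by
      have hDinv : ∀ ℓ : Fin 5, ∑ y ∈ D ℓ, χ y⁻¹ = (α ℓ : ℂ) * (starRingEnd ℂ) X := by
        intro ℓ
        calc ∑ y ∈ D ℓ, χ y⁻¹ = ∑ y ∈ D ℓ, (starRingEnd ℂ) (χ y) :=
              Finset.sum_congr rfl fun y _ => (aux_conj χ y).symm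
          _ = (starRingEnd ℂ) (∑ y ∈ D ℓ, χ y) := (map_sum _ _ _).symm
          _ = (α ℓ : ℂ) * (starRingEnd ℂ) X := by
              rw [hαdef ℓ, map_mul, Complex.conj_ofReal]
      have : ∀ ℓ ∈ Finset.univ.filter (· ≠ j),
          (∑ x ∈ D j, ∑ y ∈ D ℓ, χ (x * y⁻¹))
            = ((α j : ℂ) * X) * ((α ℓ : ℂ) * (starRingEnd ℂ) X) := by
        intro ℓ _
        rw [← hαdef j, ← hDinv ℓ, Finset.sum_mul_sum]
        exact Finset.sum_congr rfl fun x _ => Finset.sum_congr rfl fun y _ => map_mul χ x y⁻¹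
      rw [Finset.sum_congr rfl this, ← Finset.mul_sum]
      have hrest : ∑ ℓ ∈ Finset.univ.filter (· ≠ j), α ℓ = 1 - α j := by
        have hsplit := Finset.sum_filter_add_sum_filter_not Finset.univ (fun ℓ => ℓ ≠ j) α
        have hsingle : Finset.univ.filter (fun ℓ => ¬ ℓ ≠ j) = {j} := by
          ext ℓ; simp
        rw [hsingle, Finset.sum_singleton, hsumα] at hsplit
        linarith
      have hsum' : ∑ ℓ ∈ Finset.univ.filter (· ≠ j), ((α ℓ : ℂ) * (starRingEnd ℂ) X)
          = ((1 - α j : ℝ) : ℂ) * (starRingEnd ℂ) X := by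
        rw [← Finset.sum_mul]
        congr 1
        rw [← hrest]
        push_cast
        rfl
      rw [hsum']
      push_cast
      ring
    -- combine
    have hC : (α j : ℂ) * (1 - α j) * (X * (starRingEnd ℂ) X) = -(lam : ℂ) := by
      rw [← step3, ← step1, step2]
    have hXconj : X * (starRingEnd ℂ) X = ((‖X‖ ^ 2 : ℝ) : ℂ) := by
      rw [Complex.mul_conj]
      norm_cast
      rw [Complex.normSq_eq_norm_sq]
    rw [hXconj] at hC
    push_cast at hC
    apply Complex.ofReal_injective
    push_cast
    linear_combination hC
  -- real endgame
  have hR : (0:ℝ) < ‖X‖ ^ 2 := by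
    have h0 : 0 < ‖X‖ := norm_pos_iff.mpr hX
    positivity
  have hlamR : (0:ℝ) < lam := by exact_mod_cast hlam
  have hdich : ∀ j, α j = α 0 ∨ α j = 1 - α 0 := by
    intro j
    have h1 := hkey j
    have h2 := hkey 0
    have h3 : (α j - α 0) * (α j + α 0 - 1) * ‖X‖ ^ 2 = 0 := by linear_combination h2 - h1
    rcases mul_eq_zero.mp h3 with h4 | h4
    · rcases mul_eq_zero.mp h4 with h5 | h5
      · left; linarith
      · right; linarith
    · exact absurd h4 (ne_of_gt hR)
  have hane : α 0 ≠ 1 - α 0 := by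
    intro hc
    have h2 := hkey 0
    have ha : α 0 = 1/2 := by linarith
    rw [ha] at h2
    nlinarith
  have hnot : Finset.univ.filter (fun j => ¬ α j = α 0)
      = Finset.univ.filter (fun j => α j = 1 - α 0) := by
    apply Finset.filter_congr
    intro j _
    constructor
    · intro hj
      rcases hdich j with h | h
      · exact absurd h hj
      · exact h
    · intro hj hj'
      exact hane (hj'.symm.trans hj)
  set t := (Finset.univ.filter (fun j => α j = α 0)).card with ht
  have hcardsplit : t + (Finset.univ.filter (fun j => ¬ α j = α 0)).card = 5 := by
    rw [ht, Finset.card_filter_add_card_filter_not, Finset.card_univ, Fintype.card_fin]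
  have hsum_split : (t:ℝ) * α 0 + ((5 - t : ℕ):ℝ) * (1 - α 0) = 1 := by
    have h1 := Finset.sum_filter_add_sum_filter_not Finset.univ (fun j => α j = α 0) α
    rw [hsumα] at h1
    have h2 : ∑ j ∈ Finset.univ.filter (fun j => α j = α 0), α j = (t:ℝ) * α 0 := by
      rw [Finset.sum_congr rfl (fun j hj => (Finset.mem_filter.mp hj).2), Finset.sum_const,
        nsmul_eq_mul, ht]
    have h3 : ∑ j ∈ Finset.univ.filter (fun j => ¬ α j = α 0), α j
        = ((5 - t : ℕ):ℝ) * (1 - α 0) := by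
      rw [hnot, Finset.sum_congr rfl (fun j hj => (Finset.mem_filter.mp hj).2), Finset.sum_const,
        nsmul_eq_mul]
      congr 2
      rw [← hnot]
      exact Nat.eq_sub_of_add_eq' hcardsplit
    rw [h2, h3] at h1
    exact h1
  have ht1 : 0 < t := by
    rw [ht]
    exact Finset.card_pos.mpr ⟨0, by simp⟩
  have ht5 : t ≤ 5 := Nat.le.intro hcardsplit
  have hkey0 := hkey 0
  -- determine α 0
  have hval : (α 0 = 2 ∧ t = 2) ∨ (α 0 = -1 ∧ t = 3) := by
    interval_cases t
    · exfalso
      push_cast at hsum_split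
      have ha1 : α 0 = 1 := by linarith
      rw [ha1] at hkey0
      nlinarith
    · left
      push_cast at hsum_split
      constructor
      · linarith
      · rfl
    · right
      push_cast at hsum_split
      constructor
      · linarith
      · rfl
    · exfalso
      push_cast at hsum_split
      exact hα 0 (by linarith)
    · exfalso
      push_cast at hsum_split
      have ha1 : α 0 = 1/5 := by linarith
      rw [ha1] at hkey0
      nlinarith
  rcases hval with ⟨ha, htv⟩ | ⟨ha, htv⟩
  · have e1 : Finset.univ.filter (fun j => α j = 2)
        = Finset.univ.filter (fun j => α j = α 0) := by
      apply Finset.filter_congr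
      intro j _
      rw [ha]
    have e2 : Finset.univ.filter (fun j => α j = -1)
        = Finset.univ.filter (fun j => ¬ α j = α 0) := by
      rw [hnot]
      apply Finset.filter_congr
      intro j _
      rw [ha]
      norm_num
    refine ⟨by rw [e1, ← ht]; exact htv,
      by rw [e2, Nat.eq_sub_of_add_eq' hcardsplit, htv], ?_⟩
    rw [ha] at hkey0
    linarith
  · have e1 : Finset.univ.filter (fun j => α j = -1)
        = Finset.univ.filter (fun j => α j = α 0) := by
      apply Finset.filter_congr
      intro j _
      rw [ha]
    have e2 : Finset.univ.filter (fun j => α j = 2)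
        = Finset.univ.filter (fun j => ¬ α j = α 0) := by
      rw [hnot]
      apply Finset.filter_congr
      intro j _
      rw [ha]
      norm_num
    refine ⟨by rw [e2, Nat.eq_sub_of_add_eq' hcardsplit, htv],
      by rw [e1, ← ht]; exact htv, ?_⟩
    rw [ha] at hkey0
    linarith
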